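/- Let n ≥ 3 be odd and let t = (n+1)/2 + s with 1 ≤ s ≤ (n−1)/2. Then the t-graph Γ(2,n,t) of the dihedral group D_n has exactly 4s connected components. -/

import Mathlib

/-- The `t`-graph `Γ(m,n,t)`: vertices are `Fin m × Fin n` (the vertex `(i,j)` encoding
`a^i b^j`), and two distinct vertices `(i,j)`, `(k,l)` are adjacent iff
`|i - k| + |j - l| = t` (comparing coordinates as integers). -/
def tGraph (m n t : ℕ) : SimpleGraph (Fin m × Fin n) where
  Adj x y := x ≠ y ∧ |(x.1 : ℤ) - (y.1 : ℤ)| + |(x.2 : ℤ) - (y.2 : ℤ)| = t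
  symm := by
    refine ⟨?_⟩
    rintro x y ⟨h1, h2⟩
    exact ⟨h1.symm, by rw [abs_sub_comm ((y.1 : ℤ)), abs_sub_comm ((y.2 : ℤ))]; exact h2⟩
  loopless := ⟨fun x ⟨h, _⟩ => h rfl⟩

instance (m n t : ℕ) : DecidableRel (tGraph m n t).Adj := fun x y =>
  inferInstanceAs (Decidable (x ≠ y ∧ |(x.1 : ℤ) - (y.1 : ℤ)| + |(x.2 : ℤ) - (y.2 : ℤ)| = t))

namespace DihAux

lemma adj_iff (k s : ℕ) (hs : 1 ≤ s) (x y : Fin 2 × Fin (2*k+2*s+1)) :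
    (tGraph 2 (2*k+2*s+1) (k+2*s+1)).Adj x y ↔
      (((x.1:ℕ) = (y.1:ℕ) ∧ ((y.2:ℕ) = (x.2:ℕ) + (k+2*s+1) ∨ (x.2:ℕ) = (y.2:ℕ) + (k+2*s+1))) ∨
       ((x.1:ℕ) ≠ (y.1:ℕ) ∧ ((y.2:ℕ) = (x.2:ℕ) + (k+2*s) ∨ (x.2:ℕ) = (y.2:ℕ) + (k+2*s)))) := by
  obtain ⟨⟨i,hi⟩, ⟨j,hj⟩⟩ := x
  obtain ⟨⟨i',hi'⟩, ⟨j',hj'⟩⟩ := y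
  dsimp only
  show ((_ ≠ _) ∧ |(i:ℤ) - (i':ℤ)| + |(j:ℤ) - (j':ℤ)| = ((k+2*s+1 : ℕ):ℤ)) ↔ _
  constructor
  · rintro ⟨hne, habs⟩
    have hne' : ¬(i = i' ∧ j = j') := by
      intro ⟨e1, e2⟩; exact hne (by simp [Prod.ext_iff, Fin.ext_iff, e1, e2])
    rcases abs_cases ((i:ℤ) - i') with ⟨h1,_⟩|⟨h1,_⟩ <;>
      rcases abs_cases ((j:ℤ) - j') with ⟨h2,_⟩|⟨h2,_⟩ <;>
      rw [h1, h2] at habs <;> omega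
  · intro h
    refine ⟨?_, ?_⟩
    · simp only [ne_eq, Prod.ext_iff, Fin.ext_iff]
      simp only [not_and]
      intro e1 e2
      omega
    · rcases abs_cases ((i:ℤ) - i') with ⟨h1,_⟩|⟨h1,_⟩ <;>
        rcases abs_cases ((j:ℤ) - j') with ⟨h2,_⟩|⟨h2,_⟩ <;>
        rw [h1, h2] <;> omega

def Fcl (k s : ℕ) (x : Fin 2 × Fin (2*k+2*s+1)) : ℕ :=
  if (x.2:ℕ) ≤ k then 4*s - 2 + (((x.1:ℕ) + k - (x.2:ℕ)) % 2)
  else if k + 2*s ≤ (x.2:ℕ) then 4*s - 2 + (((x.1:ℕ) + (2*k+2*s+1) - (x.2:ℕ)) % 2)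
  else 2*((x.2:ℕ) - k - 1) + (x.1:ℕ)


lemma Fcl_adj (k s : ℕ) (hs : 1 ≤ s) (x y : Fin 2 × Fin (2*k+2*s+1))
    (h : (tGraph 2 (2*k+2*s+1) (k+2*s+1)).Adj x y) : Fcl k s x = Fcl k s y := by
  rw [adj_iff k s hs] at h
  obtain ⟨⟨i,hi⟩, ⟨j,hj⟩⟩ := x
  obtain ⟨⟨i',hi'⟩, ⟨j',hj'⟩⟩ := y
  unfold Fcl
  dsimp only at h ⊢
  split_ifs <;> omega

lemma Fcl_reach (k s : ℕ) (hs : 1 ≤ s) {x y : Fin 2 × Fin (2*k+2*s+1)}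
    (h : (tGraph 2 (2*k+2*s+1) (k+2*s+1)).Reachable x y) : Fcl k s x = Fcl k s y := by
  obtain ⟨w⟩ := h
  induction w with
  | nil => rfl
  | cons ha _ ih => exact (Fcl_adj k s hs _ _ ha).trans ih

lemma reach_low (k s : ℕ) (hs : 1 ≤ s) (p : Fin 2) (m : ℕ) (hm : m ≤ k) :
    (tGraph 2 (2*k+2*s+1) (k+2*s+1)).Reachable (p, ⟨k, by omega⟩)
      (⟨((p:ℕ)+m)%2, by omega⟩, ⟨k-m, by omega⟩) ∧
    (tGraph 2 (2*k+2*s+1) (k+2*s+1)).Reachable (p, ⟨k, by omega⟩)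
      (⟨((p:ℕ)+m+1)%2, by omega⟩, ⟨2*k+2*s-m, by omega⟩) := by
  have hp : (p:ℕ) < 2 := p.isLt
  induction m with
  | zero =>
    constructor
    · have e : ((⟨((p:ℕ)+0)%2, by omega⟩ : Fin 2), (⟨k-0, by omega⟩ : Fin (2*k+2*s+1)))
          = (p, (⟨k, by omega⟩ : Fin (2*k+2*s+1))) := by
        refine Prod.ext_iff.mpr ⟨Fin.ext ?_, Fin.ext ?_⟩ <;> simp <;> omega
      rw [e]
    · apply SimpleGraph.Adj.reachable
      rw [adj_iff k s hs]
      dsimp only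
      right
      constructor
      · simp; omega
      · left; simp; omega
  | succ m ih =>
    have hm' : m ≤ k := by omega
    obtain ⟨ihA, ihB⟩ := ih hm'
    have hadjBA : (tGraph 2 (2*k+2*s+1) (k+2*s+1)).Adj
        (⟨((p:ℕ)+m+1)%2, by omega⟩, ⟨2*k+2*s-m, by omega⟩)
        (⟨((p:ℕ)+(m+1))%2, by omega⟩, ⟨k-(m+1), by omega⟩) := by
      rw [adj_iff k s hs]; dsimp only
      left
      exact ⟨by omega, Or.inr (by omega)⟩
    have hadjAB : (tGraph 2 (2*k+2*s+1) (k+2*s+1)).Adj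
        (⟨((p:ℕ)+(m+1))%2, by omega⟩, ⟨k-(m+1), by omega⟩)
        (⟨((p:ℕ)+(m+1)+1)%2, by omega⟩, ⟨2*k+2*s-(m+1), by omega⟩) := by
      rw [adj_iff k s hs]; dsimp only
      right
      exact ⟨by omega, Or.inl (by omega)⟩
    refine ⟨ihB.trans hadjBA.reachable, (ihB.trans hadjBA.reachable).trans hadjAB.reachable⟩

def rep (k s : ℕ) (a : Fin (4*s)) : Fin 2 × Fin (2*k+2*s+1) :=
  if _h : (a:ℕ) < 4*s - 2 then
    (⟨(a:ℕ)%2, by omega⟩, ⟨k+1+(a:ℕ)/2, by have := a.isLt; omega⟩)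
  else (⟨(a:ℕ) - (4*s-2), by have := a.isLt; omega⟩, ⟨k, by omega⟩)

lemma Fcl_rep (k s : ℕ) (hs : 1 ≤ s) (a : Fin (4*s)) : Fcl k s (rep k s a) = a := by
  have ha := a.isLt
  unfold rep Fcl
  split_ifs <;> dsimp only at * <;> omega

lemma aux (k s : ℕ) (hs : 1 ≤ s) :
    Fintype.card (tGraph 2 (2*k+2*s+1) (k+2*s+1)).ConnectedComponent = 4*s := by
  have hbij : Function.Bijective (fun a : Fin (4*s) =>
      (tGraph 2 (2*k+2*s+1) (k+2*s+1)).connectedComponentMk (rep k s a)) := by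
    constructor
    · intro a b hab
      have h2 := Fcl_reach k s hs ((SimpleGraph.ConnectedComponent.eq).mp hab)
      rw [Fcl_rep k s hs, Fcl_rep k s hs] at h2
      exact Fin.ext h2
    · intro c
      obtain ⟨x, rfl⟩ := c.exists_rep
      obtain ⟨⟨i,hi⟩, ⟨j,hj⟩⟩ := x
      by_cases hjk : j ≤ k
      · refine ⟨⟨4*s-2+(i+(k-j))%2, by omega⟩, ?_⟩
        have hr := (reach_low k s hs ⟨(i+(k-j))%2, by omega⟩ (k-j) (by omega)).1
        have e1 : rep k s ⟨4*s-2+(i+(k-j))%2, by omega⟩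
            = ((⟨(i+(k-j))%2, by omega⟩ : Fin 2), (⟨k, by omega⟩ : Fin (2*k+2*s+1))) := by
          unfold rep
          rw [dif_neg (by dsimp only; omega)]
          refine Prod.ext_iff.mpr ⟨Fin.ext ?_, Fin.ext ?_⟩ <;> dsimp only <;> omega
        have hx : ((⟨i,hi⟩ : Fin 2), (⟨j,hj⟩ : Fin (2*k+2*s+1)))
            = ((⟨(((⟨(i+(k-j))%2, by omega⟩ : Fin 2) :ℕ)+(k-j))%2, by omega⟩ : Fin 2),
               (⟨k-(k-j), by omega⟩ : Fin (2*k+2*s+1))) := by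
          refine Prod.ext_iff.mpr ⟨Fin.ext ?_, Fin.ext ?_⟩ <;> dsimp only <;> omega
        dsimp only
        rw [e1, hx]
        exact SimpleGraph.ConnectedComponent.sound hr
      · by_cases hjd : k + 2*s ≤ j
        · refine ⟨⟨4*s-2+(i+(2*k+2*s-j)+1)%2, by omega⟩, ?_⟩
          have hr := (reach_low k s hs ⟨(i+(2*k+2*s-j)+1)%2, by omega⟩ (2*k+2*s-j) (by omega)).2
          have e1 : rep k s ⟨4*s-2+(i+(2*k+2*s-j)+1)%2, by omega⟩
              = ((⟨(i+(2*k+2*s-j)+1)%2, by omega⟩ : Fin 2), (⟨k, by omega⟩ : Fin (2*k+2*s+1))) := by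
            unfold rep
            rw [dif_neg (by dsimp only; omega)]
            refine Prod.ext_iff.mpr ⟨Fin.ext ?_, Fin.ext ?_⟩ <;> dsimp only <;> omega
          have hx : ((⟨i,hi⟩ : Fin 2), (⟨j,hj⟩ : Fin (2*k+2*s+1)))
              = ((⟨(((⟨(i+(2*k+2*s-j)+1)%2, by omega⟩ : Fin 2) :ℕ)+(2*k+2*s-j)+1)%2, by omega⟩ : Fin 2),
                 (⟨2*k+2*s-(2*k+2*s-j), by omega⟩ : Fin (2*k+2*s+1))) := by
            refine Prod.ext_iff.mpr ⟨Fin.ext ?_, Fin.ext ?_⟩ <;> dsimp only <;> omega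
          dsimp only
          rw [e1, hx]
          exact SimpleGraph.ConnectedComponent.sound hr
        · refine ⟨⟨2*(j-k-1)+i, by omega⟩, ?_⟩
          have e1 : rep k s ⟨2*(j-k-1)+i, by omega⟩
              = ((⟨i,hi⟩ : Fin 2), (⟨j,hj⟩ : Fin (2*k+2*s+1))) := by
            unfold rep
            rw [dif_pos (by dsimp only; omega)]
            refine Prod.ext_iff.mpr ⟨Fin.ext ?_, Fin.ext ?_⟩ <;> dsimp only <;> omega
          dsimp only
          rw [e1]
          rfl
  rw [← Fintype.card_fin (4*s)]
  exact (Fintype.card_of_bijective hbij).symm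

end DihAux

/-- For odd `n ≥ 3` and `t = (n+1)/2 + s` with `1 ≤ s ≤ (n-1)/2`, the `t`-graph `Γ(2,n,t)`
of the dihedral group `D_n` has exactly `4s` connected components. -/
theorem dihedral_tGraph_components_of_odd_n (n s t : ℕ) (hn : 3 ≤ n) (hnodd : Odd n)
    (hs : 1 ≤ s) (hsub : s ≤ (n - 1) / 2) (ht : t = (n + 1) / 2 + s) :
    Fintype.card (tGraph 2 n t).ConnectedComponent = 4 * s := by
  obtain ⟨h', hh'⟩ := hnodd
  obtain ⟨k, hn', ht'⟩ : ∃ k, n = 2*k+2*s+1 ∧ t = k+2*s+1 := ⟨n - t, by omega, by omega⟩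
  subst hn' ht'
  exact DihAux.aux k s hs
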